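/- Suppose there is a partition {G₁,…,G_m} of the finite group G with id ∈ G₁ and #G₁ = … = #G_m, such that (almost surely under H₀) T(gX) = T(g'X) if and only if g and g' lie in the same block G_i. Then the basic permutation test rejecting when T(X) > T^(k)(X), with k = ⌈(1-α)#G⌉, has rejection probability exactly α for every α ∈ {0, 1/m, …, (m-1)/m}. -/

import Mathlib

open MeasureTheory Finset

/-- The `k`-th smallest element (1-based) of a multiset of reals. -/
noncomputable def sortedVal (s : Multiset ℝ) (k : ℕ) : ℝ :=
  (s.sort (· ≤ ·)).getD (k - 1) 0

/-- under the partition condition (equal-sized equivalence classes of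
transformations giving equal test statistics, with `id` in the first class), the basic
permutation test is exact for every `α ∈ {0, 1/m, …, (m-1)/m}`. -/
lemma cnt_eq {G : Type*} [Fintype G] (v : G → ℝ) (p : ℝ → Prop) [DecidablePred p] :
    ((Multiset.map v Finset.univ.val).sort (· ≤ ·)).countP (fun x => decide (p x)) =
      (Finset.univ.filter fun a => p (v a)).card := by
  rw [← Multiset.coe_countP, Multiset.sort_eq, Multiset.countP_map]
  rfl

lemma key_comb {G : Type*} [Fintype G] {m : ℕ} (c : G → Fin m)
    {s' : ℕ} (hs' : 0 < s')
    (hfib : ∀ j : Fin m, (Finset.univ.filter fun g : G => c g = j).card = s')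
    (v : G → ℝ) (hgood : ∀ g g' : G, v g = v g' ↔ c g = c g')
    {i : ℕ} (hi : i < m) :
    (∀ g : G, (v g > sortedVal (Multiset.map v Finset.univ.val) ((m - i) * s') ↔
      (Finset.univ.filter fun a : G => v g ≤ v a).card ≤ i * s')) ∧
    (Finset.univ.filter fun g : G =>
      (Finset.univ.filter fun a : G => v g ≤ v a).card ≤ i * s').card = i * s' := by
  classical
  set n := Fintype.card G with hnn
  have hn : n = m * s' := by
    rw [hnn, ← Finset.card_univ,
      Finset.card_eq_sum_card_fiberwise (f := c) (t := Finset.univ) (fun x _ => mem_univ _)]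
    simp [hfib, Finset.card_univ]
  set k := (m - i) * s' with hkk
  have hmi : 0 < m - i := by omega
  have hk1 : 0 < k := Nat.mul_pos hmi hs'
  have hkn : k ≤ n := by rw [hn]; exact Nat.mul_le_mul_right _ (by omega)
  set L := ((Multiset.map v Finset.univ.val).sort (· ≤ ·)) with hLL
  have hLs : L.Pairwise (· ≤ ·) := Multiset.pairwise_sort _ _
  have hlen : L.length = n := by
    rw [hLL, Multiset.length_sort, Multiset.card_map]
    simp [hnn, Finset.card_univ]
  have hk1' : k - 1 < L.length := by omega
  set t := L[k-1]'hk1' with htt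
  have hsv : sortedVal (Multiset.map v Finset.univ.val) k = t := by
    rw [sortedVal, List.getD_eq_getElem _ _ hk1']
  -- t is a value of v
  obtain ⟨g₀, -, hg₀⟩ : ∃ g₀ ∈ Finset.univ, v g₀ = t := by
    have : t ∈ L := List.getElem_mem _
    rw [hLL, Multiset.mem_sort] at this
    simpa using Multiset.mem_map.mp this
  -- count ≤ t is at least k
  have hge : k ≤ (Finset.univ.filter fun a => v a ≤ t).card := by
    rw [← cnt_eq v (fun x => x ≤ t)]
    calc k = (L.take k).length := by simp [hlen]; omega
    _ = (L.take k).countP (fun x => decide (x ≤ t)) := by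
        symm; rw [List.countP_eq_length]
        intro x hx
        obtain ⟨j, hj, rfl⟩ := List.mem_iff_getElem.mp hx
        have hj' : j < k := by simp [List.length_take] at hj; omega
        rw [List.getElem_take]
        simp only [decide_eq_true_eq, htt]
        exact hLs.rel_get_of_le (a := ⟨j, by omega⟩) (b := ⟨k-1, hk1'⟩) (by simp; omega)
    _ ≤ L.countP (fun x => decide (x ≤ t)) := by
        conv_rhs => rw [← List.take_append_drop k L]
        rw [List.countP_append]; omega
  -- count < t is at most k - 1
  have hlt : (Finset.univ.filter fun a => v a < t).card ≤ k - 1 := by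
    rw [← cnt_eq v (fun x => x < t), ← hLL]
    conv_lhs => rw [← List.take_append_drop (k-1) L, List.countP_append]
    have h1 : (L.take (k-1)).countP (fun x => decide (x < t)) ≤ k - 1 := by
      calc _ ≤ (L.take (k-1)).length := List.countP_le_length
      _ ≤ k - 1 := by simp
    have h2 : (L.drop (k-1)).countP (fun x => decide (x < t)) = 0 := by
      rw [List.countP_eq_zero]
      intro x hx
      obtain ⟨j, hj, rfl⟩ := List.mem_iff_getElem.mp hx
      rw [List.getElem_drop]
      simp only [decide_eq_true_eq, not_lt, htt]
      exact hLs.rel_get_of_le (a := ⟨k-1, hk1'⟩) (b := ⟨k-1+j, by simp at hj; omega⟩) (by simp)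
    omega
  -- block of t has card s'
  have hblk : (Finset.univ.filter fun a => v a = t).card = s' := by
    rw [show (Finset.univ.filter fun a : G => v a = t) =
        (Finset.univ.filter fun a : G => c a = c g₀) from ?_, hfib]
    apply Finset.filter_congr
    intro a _
    rw [← hg₀, hgood]
  -- split
  have hsplit : (Finset.univ.filter fun a => v a ≤ t).card =
      (Finset.univ.filter fun a => v a < t).card + s' := by
    rw [← hblk, ← Finset.card_union_of_disjoint, ← Finset.filter_or]
    · apply congrArg
      apply Finset.filter_congr
      intro a _
      simp [le_iff_lt_or_eq]
    · rw [Finset.disjoint_filter]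
      intro a _ h1 h2
      exact absurd h2 (ne_of_lt h1)
  -- divisibility of count <
  have hdvd : s' ∣ (Finset.univ.filter fun a => v a < t).card := by
    set S := (Finset.univ.filter fun a : G => v a < t) with hS
    rw [Finset.card_eq_sum_card_fiberwise (f := c) (t := Finset.univ) (fun x _ => mem_univ _)]
    apply Finset.dvd_sum
    intro j _
    rcases Finset.eq_empty_or_nonempty (S.filter fun a => c a = j) with h | ⟨a, ha⟩
    · simp [h]
    · simp only [hS, Finset.mem_filter, Finset.mem_univ, true_and] at ha
      have : (S.filter fun a => c a = j) = (Finset.univ.filter fun g : G => c g = j) := by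
        ext b
        simp only [hS, Finset.mem_filter, Finset.mem_univ, true_and, and_iff_right_iff_imp]
        intro hb
        have : v b = v a := (hgood b a).mpr (hb.trans ha.2.symm)
        rw [this]; exact ha.1
      rw [this, hfib]
  -- conclude count < t = k - s' and count ≤ t = k
  have hle_eq : (Finset.univ.filter fun a => v a ≤ t).card = k := by
    obtain ⟨q, hq⟩ := hdvd
    have h1 : s' * q < s' * (m - i) := by
      rw [← hq, mul_comm s' (m - i), ← hkk]; omega
    have h2 : q ≤ m - i - 1 := by
      have := Nat.lt_of_mul_lt_mul_left h1; omega
    have h3 : s' * q ≤ s' * (m - i - 1) := Nat.mul_le_mul_left _ h2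
    have h4 : s' * (m - i - 1) + s' = k := by
      rw [hkk, mul_comm (m - i) s', ← Nat.mul_succ]
      congr 1
      omega
    omega
  -- count > t = i * s'
  have hgt : (Finset.univ.filter fun a => t < v a).card = i * s' := by
    have := Finset.card_filter_add_card_filter_not
      (s := (Finset.univ : Finset G)) (p := fun a => v a ≤ t)
    simp only [not_le, Finset.card_univ, ← hnn] at this
    have hin : i * s' + k = n := by
      rw [hn, hkk, ← Nat.add_mul]
      congr 1
      omega
    omega
  -- main equivalence
  have hmain : ∀ g : G, (t < v g ↔ (Finset.univ.filter fun a : G => v g ≤ v a).card ≤ i * s') := by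
    intro g
    constructor
    · intro hg
      rw [← hgt]
      apply Finset.card_le_card
      intro a ha
      simp only [Finset.mem_filter, Finset.mem_univ, true_and] at ha ⊢
      exact lt_of_lt_of_le hg ha
    · intro hcard
      by_contra hng
      push_neg at hng
      have hsub : (Finset.univ.filter fun a : G => t < v a) ∪
          (Finset.univ.filter fun a : G => v a = t) ⊆
          (Finset.univ.filter fun a : G => v g ≤ v a) := by
        intro a ha
        simp only [Finset.mem_union, Finset.mem_filter, Finset.mem_univ, true_and] at ha ⊢
        rcases ha with h | h
        · exact le_of_lt (lt_of_le_of_lt hng h)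
        · exact h ▸ hng
      have hdisj : Disjoint (Finset.univ.filter fun a : G => t < v a)
          (Finset.univ.filter fun a : G => v a = t) := by
        rw [Finset.disjoint_filter]
        intro a _ h1 h2
        exact absurd h2 (ne_of_gt h1)
      have := Finset.card_le_card hsub
      rw [Finset.card_union_of_disjoint hdisj, hgt, hblk] at this
      omega
  refine ⟨fun g => by rw [hsv]; exact hmain g, ?_⟩
  rw [show (Finset.univ.filter fun g : G =>
      (Finset.univ.filter fun a : G => v g ≤ v a).card ≤ i * s') =
      (Finset.univ.filter fun g : G => t < v g) from ?_, hgt]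
  apply Finset.filter_congr
  intro g _
  exact (hmain g).symm

theorem basic_permutation_test_exact
    {Ω 𝒳 G : Type*} [MeasurableSpace Ω] [MeasurableSpace 𝒳]
    [Group G] [Fintype G] [MulAction G 𝒳]
    (P : Measure Ω) [IsProbabilityMeasure P]
    (X : Ω → 𝒳) (hX : Measurable X)
    (hG : ∀ g : G, Measurable fun x : 𝒳 => g • x)
    (T : 𝒳 → ℝ) (hT : Measurable T)
    (hinv : ∀ g : G,
      Measure.map (fun ω => fun a : G => T (a • X ω)) P =
        Measure.map (fun ω => fun a : G => T (a • g • X ω)) P)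
    -- the partition: `c g` is the index of the block containing `g`
    (m : ℕ) (hm : 0 < m) (c : G → Fin m)
    (hc1 : c 1 = ⟨0, hm⟩)
    (hsize : ∀ i j : Fin m,
      (Finset.univ.filter fun g : G => c g = i).card =
        (Finset.univ.filter fun g : G => c g = j).card)
    (hcond : ∀ᵐ ω ∂P, ∀ g g' : G, T (g • X ω) = T (g' • X ω) ↔ c g = c g')
    (α : ℝ) (i : ℕ) (hi : i < m) (hαi : α = (i : ℝ) / m) :
    (P {ω | T (X ω) >
        sortedVal (Multiset.map (fun g : G => T (g • X ω)) Finset.univ.val)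
          (Nat.ceil ((1 - α) * (Fintype.card G : ℝ)))}).toReal = α := by
  classical
  set s' := (Finset.univ.filter fun g : G => c g = ⟨0, hm⟩).card with hs'def
  have hfib : ∀ j : Fin m, (Finset.univ.filter fun g : G => c g = j).card = s' :=
    fun j => hsize j ⟨0, hm⟩
  have hs' : 0 < s' := by
    rw [hs'def]
    apply Finset.card_pos.mpr
    exact ⟨1, by simp [hc1]⟩
  set n := Fintype.card G with hnn
  have hn : n = m * s' := by
    rw [hnn, ← Finset.card_univ,
      Finset.card_eq_sum_card_fiberwise (f := c) (t := Finset.univ) (fun x _ => mem_univ _)]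
    simp [hfib, Finset.card_univ]
  have hm0 : (m : ℝ) ≠ 0 := Nat.cast_ne_zero.mpr hm.ne'
  -- the threshold index
  have hk : Nat.ceil ((1 - α) * (n : ℝ)) = (m - i) * s' := by
    have h1 : (1 - α) * (n : ℝ) = (((m - i) * s' : ℕ) : ℝ) := by
      rw [hαi, hn]
      push_cast [Nat.cast_sub (le_of_lt hi)]
      field_simp
    rw [h1, Nat.ceil_natCast]
  set N := i * s' with hNdef
  -- the sampling map
  set f : Ω → (G → ℝ) := fun ω => fun a : G => T (a • X ω) with hfdef
  have hf : Measurable f :=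
    measurable_pi_lambda _ fun a => hT.comp ((hG a).comp hX)
  set μ := Measure.map f P with hμdef
  haveI : IsProbabilityMeasure μ := Measure.isProbabilityMeasure_map hf.aemeasurable
  -- the events
  set E : G → Set (G → ℝ) := fun g =>
    {v | (Finset.univ.filter fun a : G => v g ≤ v a).card ≤ N} with hEdef
  have hEmeas : ∀ g, MeasurableSet (E g) := by
    intro g
    have hF : Measurable fun v : G → ℝ =>
        (Finset.univ.filter fun a : G => v g ≤ v a).card := by
      simp only [Finset.card_filter]
      apply Finset.measurable_sum
      intro a _
      exact Measurable.ite (measurableSet_le (measurable_pi_apply g) (measurable_pi_apply a))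
        measurable_const measurable_const
    exact hF (measurableSet_Iic (a := N))
  -- shift invariance of μ
  have hshift : ∀ g' : G, Measurable fun v : G → ℝ => fun a => v (a * g') :=
    fun g' => measurable_pi_lambda _ fun a => measurable_pi_apply _
  have hmap : ∀ g' : G, Measure.map (fun v : G → ℝ => fun a => v (a * g')) μ = μ := by
    intro g'
    rw [hμdef, Measure.map_map (hshift g') hf]
    have : (fun v : G → ℝ => fun a => v (a * g')) ∘ f =
        fun ω => fun a : G => T (a • g' • X ω) := by
      funext ω
      funext a
      simp [hfdef, mul_smul]
    rw [this, ← hinv g']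
  -- all events have the same measure
  have hpre : ∀ g g' : G, (fun v : G → ℝ => fun a => v (a * g')) ⁻¹' (E g) = E (g * g') := by
    intro g g'
    ext v
    simp only [hEdef, Set.mem_preimage, Set.mem_setOf_eq]
    have : (Finset.univ.filter fun a : G => v (g * g') ≤ v (a * g')).card =
        (Finset.univ.filter fun a : G => v (g * g') ≤ v a).card := by
      apply Finset.card_equiv (Equiv.mulRight g')
      intro a
      simp
    rw [this]
  have hconst : ∀ g : G, μ (E g) = μ (E 1) := by
    intro g
    have : μ (E (1 * g)) = μ (E 1) := by
      rw [← hpre 1 g, ← Measure.map_apply (hshift g) (hEmeas 1), hmap g]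
    simpa using this
  -- the good set
  have hGdmeas : MeasurableSet {v : G → ℝ | ∀ g g' : G, v g = v g' ↔ c g = c g'} := by
    have : {v : G → ℝ | ∀ g g' : G, v g = v g' ↔ c g = c g'} =
        ⋂ g : G, ⋂ g' : G, {v : G → ℝ | v g = v g' ↔ c g = c g'} := by
      ext v; simp [Set.mem_iInter]
    rw [this]
    refine MeasurableSet.iInter fun g => MeasurableSet.iInter fun g' => ?_
    by_cases h : c g = c g'
    · simp only [h, iff_true]
      exact measurableSet_eq_fun (measurable_pi_apply g) (measurable_pi_apply g')
    · simp only [h, iff_false]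
      exact (measurableSet_eq_fun (measurable_pi_apply g) (measurable_pi_apply g')).compl
  have hgoodae : ∀ᵐ v ∂μ, ∀ g g' : G, v g = v g' ↔ c g = c g' := by
    rw [hμdef, MeasureTheory.ae_map_iff hf.aemeasurable hGdmeas]
    filter_upwards [hcond] with ω hω
    exact hω
  -- sum of the event measures
  have hsum : (n : ENNReal) * μ (E 1) = (N : ENNReal) := by
    have h1 : ∑ g : G, μ (E g) = (n : ENNReal) * μ (E 1) := by
      rw [Finset.sum_congr rfl (fun g _ => hconst g), Finset.sum_const, Finset.card_univ,
        ← hnn, nsmul_eq_mul]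
    have h2 : ∑ g : G, μ (E g) = (N : ENNReal) := by
      have e1 : ∀ g : G, μ (E g) = ∫⁻ v, (E g).indicator 1 v ∂μ :=
        fun g => (lintegral_indicator_one (hEmeas g)).symm
      rw [Finset.sum_congr rfl (fun g _ => e1 g),
        ← lintegral_finset_sum _ (fun g _ => measurable_one.indicator (hEmeas g))]
      have e2 : ∫⁻ v, ∑ g : G, (E g).indicator 1 v ∂μ = ∫⁻ _, (N : ENNReal) ∂μ := by
        apply lintegral_congr_ae
        filter_upwards [hgoodae] with v hv
        have key := key_comb c hs' hfib v hv hi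
        have e3 : ∑ g : G, (E g).indicator (1 : (G → ℝ) → ENNReal) v =
            ((Finset.univ.filter fun g : G =>
              (Finset.univ.filter fun a : G => v g ≤ v a).card ≤ i * s').card : ENNReal) := by
          rw [Finset.card_filter, Nat.cast_sum]
          apply Finset.sum_congr rfl
          intro g _
          simp only [Set.indicator_apply, hEdef, Set.mem_setOf_eq, hNdef]
          split <;> simp
        rw [e3, key.2, hNdef]
      rw [e2, lintegral_const, measure_univ, mul_one]
    rw [← h1, h2]
  -- identify the rejection probability
  have hPA : P {ω | T (X ω) >
      sortedVal (Multiset.map (fun g : G => T (g • X ω)) Finset.univ.val)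
        (Nat.ceil ((1 - α) * (Fintype.card G : ℝ)))} = μ (E 1) := by
    have hae : {ω | T (X ω) >
        sortedVal (Multiset.map (fun g : G => T (g • X ω)) Finset.univ.val)
          (Nat.ceil ((1 - α) * (Fintype.card G : ℝ)))} =ᵐ[P] f ⁻¹' (E 1) := by
      rw [Filter.eventuallyEq_set]
      filter_upwards [hcond] with ω hω
      have hgood : ∀ g g' : G, f ω g = f ω g' ↔ c g = c g' := hω
      have key := (key_comb c hs' hfib (f ω) hgood hi).1 1
      simp only [Set.mem_setOf_eq, Set.mem_preimage, hEdef, ← hnn, hk]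
      have hX1 : T (X ω) = f ω 1 := by simp [hfdef]
      have hmul : (fun g : G => T (g • X ω)) = f ω := rfl
      rw [hX1, hmul, hNdef]
      exact key
    rw [measure_congr hae, hμdef, Measure.map_apply hf (hEmeas 1)]
  rw [hPA]
  -- final arithmetic
  have hfin : μ (E 1) ≠ ⊤ := measure_ne_top _ _
  have hn0 : (n : ℝ) ≠ 0 := by
    rw [hn]; positivity
  have htr : (n : ℝ) * (μ (E 1)).toReal = (N : ℝ) := by
    have := congrArg ENNReal.toReal hsum
    rwa [ENNReal.toReal_mul, ENNReal.toReal_natCast, ENNReal.toReal_natCast] at this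
  have : (μ (E 1)).toReal = (N : ℝ) / n := by
    field_simp at htr ⊢
    linarith [htr]
  rw [this, hαi, hNdef, hn]
  have hs'0 : (s' : ℝ) ≠ 0 := Nat.cast_ne_zero.mpr hs'.ne'
  push_cast
  field_simp
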